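/- arXiv:2204.11012 — 2 statements merged into one kernel-verified Lean document; each statement's English description precedes it below -/
import Mathlib

section
/- Let d^L_{G'}(r,v) = (d, l) be the landmark distance from r to v in G'. If d = ∞ or l = True, then in the minimal highway cover labelling Γ' of G' the vertex v has no r-label; otherwise v has exactly the r-label (r, d). -/
open scoped Classical

variable {V : Type*}

namespace BatchHL

/-- `l` is a walk in `G` from `r` to `v`, given as its (nonempty) list of visited vertices. -/
def IsWalk (G : SimpleGraph V) (r v : V) (l : List V) : Prop :=
  l ≠ [] ∧ l.head? = some r ∧ l.getLast? = some v ∧ l.Chain' G.Adj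

/-- The length (number of edges) of a walk given as a list of vertices. -/
def len (l : List V) : ℕ := l.length - 1

/-- The walk `l` passes through the (undirected) edge `(a, b)`. -/
def Passes (l : List V) (a b : V) : Prop :=
  (a, b) ∈ l.zip l.tail ∨ (b, a) ∈ l.zip l.tail

/-- `P_G(r,v)`: the set of all shortest paths between `r` and `v` in `G`. -/
def SPaths (G : SimpleGraph V) (r v : V) : Set (List V) :=
  {l | IsWalk G r v l ∧ ∀ l', IsWalk G r v l' → l.length ≤ l'.length}

/-- `(a,b)` is an edge deleted by the batch update turning `G` into `G'`. -/
def DeletedEdge (G G' : SimpleGraph V) (a b : V) : Prop := G.Adj a b ∧ ¬ G'.Adj a b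

/-- `(a,b)` is an edge inserted by the batch update turning `G` into `G'`. -/
def InsertedEdge (G G' : SimpleGraph V) (a b : V) : Prop := G'.Adj a b ∧ ¬ G.Adj a b

/-- `(a,b)` is an edge of the batch update `B` turning `G` into `G'`. -/
def UpdatedEdge (G G' : SimpleGraph V) (a b : V) : Prop :=
  InsertedEdge G G' a b ∨ DeletedEdge G G' a b

/-- The walk `l` passes through a deleted edge. -/
def PassesDeleted (G G' : SimpleGraph V) (l : List V) : Prop :=
  ∃ a b, DeletedEdge G G' a b ∧ Passes l a b

/-- The walk `l` passes through an inserted edge. -/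
def PassesInserted (G G' : SimpleGraph V) (l : List V) : Prop :=
  ∃ a b, InsertedEdge G G' a b ∧ Passes l a b

/-- `v` is affected w.r.t. landmark `r` iff the set of shortest paths changes. -/
def Affected (G G' : SimpleGraph V) (r v : V) : Prop := SPaths G r v ≠ SPaths G' r v

/-- A composite path from `r` to `v`: a prefix lying in `G` followed by a suffix lying in `G'`. -/
def IsComposite (G G' : SimpleGraph V) (r v : V) (l : List V) : Prop :=
  ∃ w l₁ l₂, IsWalk G r w l₁ ∧ IsWalk G' w v l₂ ∧ l = l₁ ++ l₂.tail

/-- A significant composite path: a composite path whose `G`-prefix passes through a deleted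
edge and whose `G'`-suffix passes through an inserted edge. -/
def IsSigComposite (G G' : SimpleGraph V) (r v : V) (l : List V) : Prop :=
  ∃ w l₁ l₂, IsWalk G r w l₁ ∧ IsWalk G' w v l₂ ∧ l = l₁ ++ l₂.tail ∧
    PassesDeleted G G' l₁ ∧ PassesInserted G G' l₂

/-- `v` is composite-path affected w.r.t. `r`. -/
def CPAffected (G G' : SimpleGraph V) (r v : V) : Prop :=
  Affected G G' r v ∨ ∃ l, IsSigComposite G G' r v l ∧ (len l : ℕ∞) ≤ G.edist r v

/-- A distance labelling: each label entry `(r, δ) ∈ L v` satisfies `δ = d_G(r,v)`. -/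
def IsLabelling (G : SimpleGraph V) (L : V → Set (V × ℕ∞)) : Prop :=
  ∀ v r δ, (r, δ) ∈ L v → δ = G.edist r v

/-- A 2-hop cover labelling: a distance labelling such that every pair `s, t` has a common
hub `r` lying on a shortest path between `s` and `t`. -/
def Is2HopCover (G : SimpleGraph V) (L : V → Set (V × ℕ∞)) : Prop :=
  IsLabelling G L ∧ ∀ s t : V, ∃ r, (r, G.edist r s) ∈ L s ∧ (r, G.edist r t) ∈ L t ∧
    G.edist s r + G.edist r t = G.edist s t

/-- A highway cover labelling `Γ = (H, L)` over `G` with landmarks `R`.  The highway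
distances `δ_H(r,r_i)` are by definition the graph distances `d_G(r,r_i)`. -/
def IsHighwayCover (G : SimpleGraph V) (R : Set V) (L : V → Set (V × ℕ∞)) : Prop :=
  (∀ v r δ, (r, δ) ∈ L v → r ∈ R ∧ δ = G.edist r v) ∧
  ∀ v, v ∉ R → ∀ r ∈ R,
    G.edist r v = sInf {x | ∃ ri δ, (ri, δ) ∈ L v ∧ x = δ + G.edist r ri}

/-- The landmark length / landmark distance values: `⊤` for "no path", otherwise a pair of a
length and a landmark flag (a `Prop`). -/
abbrev LLen := WithTop (ℕ × Prop)

/-- Lexicographic order on landmark lengths, with flag ordering `True < False`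
(i.e. `x ≤ y` at equal length iff `y`'s flag implies `x`'s flag). -/
def llLe : LLen → LLen → Prop
  | _, none => True
  | none, some _ => False
  | some a, some b => a.1 < b.1 ∨ (a.1 = b.1 ∧ (b.2 → a.2))

/-- Strict lexicographic order on landmark lengths. -/
def llLt (x y : LLen) : Prop := llLe x y ∧ ¬ llLe y x

/-- The extension operator `⊕`: `(d,l) ⊕ w = (d+1, True)` if `w ∈ R∖{r}`, else `(d+1, l)`. -/
def oplus (R : Set V) (r : V) : LLen → V → LLen
  | none, _ => none
  | some a, w => some (a.1 + 1, (w ∈ R ∧ w ≠ r) ∨ a.2)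

/-- The landmark length `lml(l)` of a walk `l` starting at `r`: its length together with the
flag recording whether it passes through a landmark other than `r`. -/
def lmLen (R : Set V) (r : V) (l : List V) : LLen :=
  some (len l, ∃ w ∈ l, w ∈ R ∧ w ≠ r)

/-- The landmark distance `d^L_G(r,v)`: the lexicographically minimal landmark length of a
walk from `r` to `v` (with `True < False` on flags), `⊤` if there is none.  Explicitly, its
length component is the minimal walk length and its flag holds iff some walk of minimal
length passes through a landmark other than `r`. -/
noncomputable def lmDist (G : SimpleGraph V) (R : Set V) (r v : V) : LLen :=
  if ∃ l, IsWalk G r v l then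
    some (sInf {n | ∃ l, IsWalk G r v l ∧ len l = n},
      ∃ l, IsWalk G r v l ∧ len l = sInf {n | ∃ l', IsWalk G r v l' ∧ len l' = n} ∧
        ∃ w ∈ l, w ∈ R ∧ w ≠ r)
  else ⊤

/-- Order on extended landmark lengths `(landmark length, deletion flag)`, lexicographic with
`True < False` on the deletion flag. -/
def ellLe (x y : LLen × Prop) : Prop := llLt x.1 y.1 ∨ (x.1 = y.1 ∧ (y.2 → x.2))

/-- Strict order on extended landmark lengths. -/
def ellLt (x y : LLen × Prop) : Prop := ellLe x y ∧ ¬ ellLe y x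

/-- `β(r,v) = (d^L_G(r,v), True)`. -/
noncomputable def beta (G : SimpleGraph V) (R : Set V) (r v : V) : LLen × Prop :=
  (lmDist G R r v, True)

/-- The distance bound `d_bou(u, S)` of `u` w.r.t. `S` in `G'`. -/
noncomputable def dbou (G' : SimpleGraph V) (r : V) (S : Set V) (u : V) : ℕ∞ :=
  ⨅ (w : V) (_ : G'.Adj u w ∧ w ∉ S), (G'.edist r w + 1)

/-- The set `{ d^L_{G'}(r,w) ⊕ v | w ∈ N_{G'}(v) ∖ S }`, whose lexicographic minimum is the
landmark distance bound `d^L_bou(v,S)`. -/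
noncomputable def lmBouSet (G' : SimpleGraph V) (R : Set V) (r v : V) (S : Set V) :
    Set LLen :=
  {x | ∃ w, G'.Adj v w ∧ w ∉ S ∧ x = oplus R r (lmDist G' R r w) v}

/-- The subgraph `G[V ∖ R]` obtained by removing all landmarks (landmarks become isolated). -/
def removeLandmarks (G : SimpleGraph V) (R : Set V) : SimpleGraph V where
  Adj u w := G.Adj u w ∧ u ∉ R ∧ w ∉ R
  symm := ⟨fun u w ⟨h, hu, hw⟩ => ⟨h.symm, hw, hu⟩⟩
  loopless := ⟨fun u ⟨h, _, _⟩ => G.loopless.irrefl u h⟩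

section Aux

open SimpleGraph

lemma enat_sInf_mem {S : Set ℕ∞} (h : S.Nonempty) : sInf S ∈ S := by
  obtain ⟨a, ha, hmin⟩ := (wellFounded_lt (α := ℕ∞)).has_min S h
  have : sInf S = a :=
    le_antisymm (sInf_le ha) (le_sInf fun b hb => not_lt.mp (hmin b hb))
  rw [this]; exact ha

lemma isWalk_support (G : SimpleGraph V) {a b : V} (p : G.Walk a b) :
    IsWalk G a b p.support := by
  refine ⟨p.support_ne_nil, ?_, ?_, p.isChain_adj_support⟩
  · rw [p.support_eq_cons]; rfl
  · rw [List.getLast?_eq_getLast p.support_ne_nil, p.getLast_support]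

lemma len_support (G : SimpleGraph V) {a b : V} (p : G.Walk a b) :
    len p.support = p.length := by
  have := p.length_support
  unfold len; omega

lemma isWalk_exists_walk (G : SimpleGraph V) :
    ∀ (l : List V) (a b : V), IsWalk G a b l → ∃ p : G.Walk a b, p.support = l := by
  intro l
  induction l with
  | nil => intro a b h; exact absurd rfl h.1
  | cons x rest ih =>
    intro a b h
    obtain ⟨-, hh, hl, hc⟩ := h
    have hxa : x = a := by simpa using hh
    subst hxa
    cases rest with
    | nil =>
      have hb : x = b := by simpa using hl
      subst hb
      exact ⟨SimpleGraph.Walk.nil, rfl⟩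
    | cons y t =>
      obtain ⟨hadj, hc'⟩ := List.isChain_cons_cons.mp hc
      have hw : IsWalk G y b (y :: t) :=
        ⟨List.cons_ne_nil _ _, rfl, by simpa using hl, hc'⟩
      obtain ⟨p, hp⟩ := ih y b hw
      exact ⟨SimpleGraph.Walk.cons hadj p, by simp [hp]⟩

lemma edist_eq_sInf_len (G : SimpleGraph V) {a b : V} (h : ∃ l, IsWalk G a b l) :
    G.edist a b = ((sInf {n | ∃ l, IsWalk G a b l ∧ len l = n} : ℕ) : ℕ∞) := by
  obtain ⟨l0, hl0⟩ := h
  set S := {n | ∃ l, IsWalk G a b l ∧ len l = n} with hSdef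
  have hSne : S.Nonempty := ⟨len l0, l0, hl0, rfl⟩
  obtain ⟨l, hl, hlen⟩ := Nat.sInf_mem hSne
  obtain ⟨p, hp⟩ := isWalk_exists_walk G l a b hl
  have hplen : p.length = sInf S := by
    have h1 := p.length_support
    rw [hp] at h1
    unfold len at hlen; omega
  obtain ⟨q, hq⟩ := SimpleGraph.Reachable.exists_walk_length_eq_edist ⟨p⟩
  apply le_antisymm
  · calc G.edist a b ≤ p.length := SimpleGraph.edist_le p
      _ = _ := by rw [hplen]
  · have hmem : len q.support ∈ S := ⟨q.support, isWalk_support G q, rfl⟩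
    have h1 : sInf S ≤ q.length := by
      have := Nat.sInf_le hmem
      rwa [len_support] at this
    calc ((sInf S : ℕ) : ℕ∞) ≤ (q.length : ℕ∞) := Nat.cast_le.mpr h1
      _ = G.edist a b := hq

lemma flag_of_mid (G : SimpleGraph V) (R : Set V) {r v ri : V} (hri : ri ∈ R) (hne : ri ≠ r)
    (hsum : G.edist r ri + G.edist ri v = G.edist r v) (hfin : G.edist r v ≠ ⊤) :
    ∃ l, IsWalk G r v l ∧ len l = sInf {n | ∃ l', IsWalk G r v l' ∧ len l' = n} ∧
      ∃ w ∈ l, w ∈ R ∧ w ≠ r := by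
  have h1 : G.edist r ri ≠ ⊤ := by
    intro h; rw [h, top_add] at hsum; exact hfin hsum.symm
  have h2 : G.edist ri v ≠ ⊤ := by
    intro h; rw [h, add_top] at hsum; exact hfin hsum.symm
  obtain ⟨p, hp⟩ := SimpleGraph.exists_walk_of_edist_ne_top h1
  obtain ⟨q, hq⟩ := SimpleGraph.exists_walk_of_edist_ne_top h2
  have hiw := isWalk_support G (p.append q)
  refine ⟨(p.append q).support, hiw, ?_, ri, ?_, hri, hne⟩
  · have hS := edist_eq_sInf_len G ⟨(p.append q).support, hiw⟩
    have hlen : ((p.append q).length : ℕ∞) = G.edist r v := by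
      rw [SimpleGraph.Walk.length_append]; push_cast; rw [hp, hq, hsum]
    rw [len_support]
    have : ((p.append q).length : ℕ∞) =
        ((sInf {n | ∃ l', IsWalk G r v l' ∧ len l' = n} : ℕ) : ℕ∞) := by
      rw [hlen, hS]
    exact_mod_cast this
  · rw [SimpleGraph.Walk.mem_support_append_iff]
    exact Or.inl p.end_mem_support

/-- The flag predicate: some shortest walk from `r` to `u` passes through a landmark ≠ `r`. -/
def Flag (G : SimpleGraph V) (R : Set V) (r u : V) : Prop :=
  ∃ l, IsWalk G r u l ∧ len l = sInf {n | ∃ l', IsWalk G r u l' ∧ len l' = n} ∧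
    ∃ w ∈ l, w ∈ R ∧ w ≠ r

/-- The canonical minimal highway cover labelling. -/
noncomputable def L0 (G : SimpleGraph V) (R : Set V) : V → Set (V × ℕ∞) :=
  fun u => {p | p.1 ∈ R ∧ p.2 = G.edist p.1 u ∧ p.2 ≠ ⊤ ∧ ¬ Flag G R p.1 u}

lemma L0_highway (G : SimpleGraph V) (R : Set V) : IsHighwayCover G R (L0 G R) := by
  constructor
  · rintro u x δ ⟨hx, hδ, -, -⟩; exact ⟨hx, hδ⟩
  · intro u hu r hr
    apply le_antisymm
    · apply le_sInf
      rintro x ⟨ri, δ, ⟨hri, hδ, -, -⟩, rfl⟩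
      rw [show δ = G.edist ri u from hδ]
      calc G.edist r u ≤ G.edist r ri + G.edist ri u := SimpleGraph.edist_triangle
        _ = G.edist ri u + G.edist r ri := add_comm _ _
    · by_cases hfin : G.edist r u = ⊤
      · rw [hfin]; exact le_top
      set T := {m : ℕ | ∃ ri ∈ R, G.edist r ri + G.edist ri u = G.edist r u ∧
        (G.edist ri u).toNat = m} with hTdef
      have hTne : T.Nonempty :=
        ⟨(G.edist r u).toNat, r, hr, by rw [SimpleGraph.edist_self, zero_add], rfl⟩
      obtain ⟨ri, hriR, hsum, htn⟩ := Nat.sInf_mem hTne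
      have hfin_ri : G.edist ri u ≠ ⊤ := by
        intro h; rw [h, add_top] at hsum; exact hfin hsum.symm
      have hnoflag : ¬ Flag G R ri u := by
        rintro ⟨l, hl, hlen, w, hwl, hwR, hwne⟩
        obtain ⟨p, hp⟩ := isWalk_exists_walk G l ri u hl
        have hplen2 : p.length = len l := by
          have h1 := p.length_support
          rw [hp] at h1
          unfold len; omega
        have hplen : (p.length : ℕ∞) = G.edist ri u := by
          rw [edist_eq_sInf_len G ⟨l, hl⟩]
          norm_cast
          rw [hplen2, hlen]
        have hw : w ∈ p.support := by rw [hp]; exact hwl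
        obtain ⟨q1, q2, hq12⟩ := SimpleGraph.Walk.mem_support_iff_exists_append.mp hw
        have hsplit : G.edist ri w + G.edist w u = G.edist ri u := by
          apply le_antisymm
          · calc G.edist ri w + G.edist w u ≤ (q1.length : ℕ∞) + (q2.length : ℕ∞) :=
                add_le_add (SimpleGraph.edist_le q1) (SimpleGraph.edist_le q2)
              _ = (p.length : ℕ∞) := by
                rw [hq12, SimpleGraph.Walk.length_append]; push_cast; ring
              _ = G.edist ri u := hplen
          · exact SimpleGraph.edist_triangle
        have hwu_fin : G.edist w u ≠ ⊤ := by
          intro h; rw [h, add_top] at hsplit; exact hfin_ri hsplit.symm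
        have hone : (1 : ℕ∞) ≤ G.edist ri w :=
          Order.one_le_iff_pos.mpr (SimpleGraph.edist_pos_of_ne (Ne.symm hwne))
        have hw_eq : G.edist r w + G.edist w u = G.edist r u := by
          apply le_antisymm
          · calc G.edist r w + G.edist w u
                ≤ (G.edist r ri + G.edist ri w) + G.edist w u :=
                  add_le_add_left SimpleGraph.edist_triangle _
              _ = G.edist r ri + (G.edist ri w + G.edist w u) := add_assoc _ _ _
              _ = G.edist r ri + G.edist ri u := by rw [hsplit]
              _ = G.edist r u := hsum
          · exact SimpleGraph.edist_triangle
        have hlt : (G.edist w u).toNat < (G.edist ri u).toNat := by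
          have e1 := ENat.coe_toNat hwu_fin
          have e2 := ENat.coe_toNat hfin_ri
          have key : ((G.edist w u).toNat : ℕ∞) + 1 ≤ ((G.edist ri u).toNat : ℕ∞) := by
            rw [e1, e2, ← hsplit]
            calc G.edist w u + 1 ≤ G.edist w u + G.edist ri w := add_le_add_right hone _
              _ = G.edist ri w + G.edist w u := add_comm _ _
          have key2 : ((G.edist w u).toNat + 1 : ℕ) ≤ ((G.edist ri u).toNat : ℕ) := by
            exact_mod_cast key
          omega
        have hmem : (G.edist w u).toNat ∈ T := ⟨w, hwR, hw_eq, rfl⟩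
        have := Nat.sInf_le hmem
        omega
      apply sInf_le
      exact ⟨ri, G.edist ri u, ⟨hriR, rfl, hfin_ri, hnoflag⟩, by rw [← hsum, add_comm]⟩

end Aux

/-- **Lemma 4.** Let `d^L_{G'}(r,v) = (d,l)`.  If `d = ∞` or `l = True` then
`v` has no `r`-label in the minimal highway cover labelling `Γ'` of `G'`; otherwise `v` has
exactly the `r`-label `(r, d)`. -/
theorem r_label_characterization (G' : SimpleGraph V) (R : Set V) (r v : V)
    (hr : r ∈ R) (hv : v ∉ R) (L' : V → Set (V × ℕ∞))
    (hL' : IsHighwayCover G' R L')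
    (hmin : ∀ L'', IsHighwayCover G' R L'' → ∀ u, L' u ⊆ L'' u) :
    ((lmDist G' R r v = ⊤ ∨ ∃ d fl, lmDist G' R r v = some (d, fl) ∧ fl) →
        ∀ δ : ℕ∞, (r, δ) ∉ L' v) ∧
    (∀ d fl, lmDist G' R r v = some (d, fl) → ¬ fl →
        ∀ δ : ℕ∞, ((r, δ) ∈ L' v ↔ δ = (d : ℕ∞))) := by
  constructor
  · intro h δ hmem
    obtain ⟨hrR, hδ, hδtop, hnf⟩ := hmin (L0 G' R) (L0_highway G' R) v hmem
    rcases h with htop | ⟨d, fl, heq, hfl⟩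
    · by_cases hex : ∃ l, IsWalk G' r v l
      · rw [show lmDist G' R r v = (some (sInf {n | ∃ l, IsWalk G' r v l ∧ len l = n}, Flag G' R r v) : Option (ℕ × Prop)) from if_pos hex] at htop
        simp at htop
      · have hnr : ¬ G'.Reachable r v := fun hre =>
          hex ⟨hre.some.support, isWalk_support G' hre.some⟩
        exact hδtop (hδ.trans (SimpleGraph.edist_eq_top_of_not_reachable hnr))
    · have hex : ∃ l, IsWalk G' r v l := by
        by_contra hex
        rw [show lmDist G' R r v = ⊤ from if_neg hex] at heq
        simp at heq
      rw [show lmDist G' R r v = (some (sInf {n | ∃ l, IsWalk G' r v l ∧ len l = n}, Flag G' R r v) : Option (ℕ × Prop)) from if_pos hex] at heq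
      have hinj := Option.some.inj heq
      have hflP : Flag G' R r v = fl := congrArg Prod.snd hinj
      exact hnf (by rw [hflP]; exact hfl)
  · intro d fl heq hnfl δ
    have hex : ∃ l, IsWalk G' r v l := by
      by_contra hex
      rw [show lmDist G' R r v = ⊤ from if_neg hex] at heq
      simp at heq
    rw [show lmDist G' R r v = (some (sInf {n | ∃ l, IsWalk G' r v l ∧ len l = n}, Flag G' R r v) : Option (ℕ × Prop)) from if_pos hex] at heq
    have hinj := Option.some.inj heq
    have hd : sInf {n | ∃ l, IsWalk G' r v l ∧ len l = n} = d := congrArg Prod.fst hinj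
    have hflP : Flag G' R r v = fl := congrArg Prod.snd hinj
    have hedist : G'.edist r v = (d : ℕ∞) := by
      rw [edist_eq_sInf_len G' hex, hd]
    constructor
    · intro hmem
      rw [(hL'.1 v r δ hmem).2, hedist]
    · rintro rfl
      have hcov := hL'.2 v hv r hr
      set X := {x | ∃ ri δ', (ri, δ') ∈ L' v ∧ x = δ' + G'.edist r ri} with hXdef
      have hXne : X.Nonempty := by
        by_contra hXe
        rw [Set.not_nonempty_iff_eq_empty] at hXe
        rw [hXe, sInf_empty, hedist] at hcov
        exact (ENat.coe_ne_top d) hcov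
      obtain ⟨ri, δ', hmem', hx⟩ := enat_sInf_mem hXne
      obtain ⟨hriR, hδ'⟩ := hL'.1 v ri δ' hmem'
      have hxval : δ' + G'.edist r ri = G'.edist r v := by rw [← hx, ← hcov]
      by_cases hri : ri = r
      · subst hri
        rw [SimpleGraph.edist_self, add_zero] at hxval
        have : δ' = (d : ℕ∞) := by rw [hxval, hedist]
        exact this ▸ hmem'
      · exfalso
        rw [hδ'] at hxval
        have hsum : G'.edist r ri + G'.edist ri v = G'.edist r v := by
          rw [add_comm]; exact hxval
        have hfin : G'.edist r v ≠ ⊤ := by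
          rw [hedist]; exact ENat.coe_ne_top d
        exact hnfl (hflP ▸ (flag_of_mid G' R hriR hri hsum hfin : Flag G' R r v))

end BatchHL
end

section
/- Let S be a set of vertices not containing r, and let v ∈ S have minimal distance bound d_bou(v,S) among all vertices of S, where d_bou(v,S) = min over neighbors w of v in G' with w ∉ S of d_{G'}(r,w) + 1. Then the landmark distance from r to v in G' equals the landmark distance bound: d^L_{G'}(r,v) = d^L_bou(v,S) = min over neighbors w ∉ S of d^L_{G'}(r,w) ⊕ v. -/
open scoped Classical

variable {V : Type*}

namespace BatchHL

section Aux

variable {G : SimpleGraph V} {r v w : V} {l : List V}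

lemma IsWalk.len_pos (h : IsWalk G r v l) (hne : v ≠ r) : 1 ≤ len l := by
  obtain ⟨h0, hh, hl, -⟩ := h
  rcases l with _ | ⟨a, _ | ⟨b, t⟩⟩
  · exact absurd rfl h0
  · have h1 : a = r := by simpa using hh
    have h2 : a = v := by simpa using hl
    exact absurd (h2.symm.trans h1) hne
  · simp only [len, List.length_cons]; omega

lemma IsWalk.last_mem (h : IsWalk G r v l) : v ∈ l := by
  obtain ⟨h0, -, hl, -⟩ := h
  rw [List.getLast?_eq_getLast_of_ne_nil h0] at hl
  exact (Option.some.inj hl) ▸ List.getLast_mem h0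

lemma isWalk_support_s12 (p : G.Walk r v) : IsWalk G r v p.support := by
  refine ⟨p.support_ne_nil, ?_, ?_, p.isChain_adj_support⟩
  · rw [p.support_eq_cons]; rfl
  · rw [List.getLast?_eq_getLast_of_ne_nil p.support_ne_nil]
    exact congrArg some p.getLast_support

lemma len_support_s12 (p : G.Walk r v) : len p.support = p.length := by
  simp [len, SimpleGraph.Walk.length_support]

lemma exists_walk_len : ∀ (l : List V) (r : V), IsWalk G r v l →
    ∃ p : G.Walk r v, p.length = len l := by
  intro l
  induction l with
  | nil => intro r h; exact absurd rfl h.1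
  | cons a t ih =>
    rintro r ⟨-, hh, hl, hc⟩
    have hra : a = r := by simpa using hh
    subst hra
    cases t with
    | nil =>
      have hva : v = a := by simpa using hl.symm
      subst hva
      exact ⟨SimpleGraph.Walk.nil, rfl⟩
    | cons b t' =>
      have hadj : G.Adj a b := (List.isChain_cons_cons.mp hc).1
      have hw : IsWalk G b v (b :: t') :=
        ⟨List.cons_ne_nil _ _, rfl, by rw [← List.getLast?_cons_cons (a := a)]; exact hl,
          (List.isChain_cons_cons.mp hc).2⟩
      obtain ⟨p, hp⟩ := ih b hw
      refine ⟨SimpleGraph.Walk.cons hadj p, ?_⟩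
      simp only [SimpleGraph.Walk.length_cons, hp, len, List.length_cons]
      omega

lemma walkable_iff : (∃ l, IsWalk G r v l) ↔ G.Reachable r v := by
  constructor
  · rintro ⟨l, hl⟩
    obtain ⟨p, -⟩ := exists_walk_len l r hl
    exact ⟨p⟩
  · rintro ⟨p⟩
    exact ⟨p.support, isWalk_support_s12 p⟩

lemma sInf_len_eq_edist (h : ∃ l, IsWalk G r v l) :
    ((sInf {n : ℕ | ∃ l, IsWalk G r v l ∧ len l = n} : ℕ) : ℕ∞) = G.edist r v := by
  obtain ⟨l₀, hl₀⟩ := h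
  have hne : {n | ∃ l, IsWalk G r v l ∧ len l = n}.Nonempty := ⟨len l₀, l₀, hl₀, rfl⟩
  obtain ⟨l₁, hl₁, hlen⟩ := Nat.sInf_mem hne
  obtain ⟨p, hp⟩ := exists_walk_len l₁ r hl₁
  refine le_antisymm ?_ ?_
  · obtain ⟨q, hq⟩ := (walkable_iff.mp ⟨l₀, hl₀⟩).exists_walk_length_eq_edist
    rw [← hq]
    have hm : q.length ∈ {n : ℕ | ∃ l, IsWalk G r v l ∧ len l = n} :=
      ⟨q.support, isWalk_support_s12 q, len_support_s12 q⟩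
    exact_mod_cast Nat.sInf_le hm
  · calc G.edist r v ≤ p.length := p.edist_le
      _ = _ := by rw [hp, hlen]

lemma isWalk_append (h : IsWalk G r w l) (hadj : G.Adj w v) :
    IsWalk G r v (l ++ [v]) ∧ len (l ++ [v]) = len l + 1 := by
  obtain ⟨h0, hh, hl, hc⟩ := h
  refine ⟨⟨by simp, ?_, ?_, ?_⟩, ?_⟩
  · rw [List.head?_append_of_ne_nil _ h0]; exact hh
  · simp
  · refine List.isChain_append.mpr ⟨hc, List.isChain_singleton _, ?_⟩
    intro x hx y hy
    have hxw : x = w := by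
      rw [Option.mem_def, hl] at hx
      exact (Option.some.inj hx).symm
    have hyv : y = v := (by simpa using hy : v = y).symm
    subst hxw; subst hyv; exact hadj
  · have := List.length_pos_iff.mpr h0
    simp only [len, List.length_append, List.length_singleton]
    omega

lemma isWalk_split (h : IsWalk G r v l) (hvr : v ≠ r) :
    ∃ w l', IsWalk G r w l' ∧ G.Adj w v ∧ l = l' ++ [v] ∧ len l = len l' + 1 := by
  obtain ⟨h0, hh, hl, hc⟩ := h
  have hlen : 1 ≤ len l := IsWalk.len_pos ⟨h0, hh, hl, hc⟩ hvr
  have hgl : l.getLast h0 = v := by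
    rw [List.getLast?_eq_getLast_of_ne_nil h0] at hl
    exact Option.some.inj hl
  have hsplit : l = l.dropLast ++ [v] := by
    conv_lhs => rw [← List.dropLast_append_getLast h0]
    rw [hgl]
  have hlength : l.length = l.dropLast.length + 1 := by
    conv_lhs => rw [hsplit]
    simp
  have hdne : l.dropLast ≠ [] := by
    intro hd
    rw [hd] at hlength
    simp only [len, List.length_nil] at hlen hlength
    omega
  have hc' : (l.dropLast ++ [v]).Chain' G.Adj := hsplit ▸ hc
  obtain ⟨c1, -, cross⟩ := List.isChain_append.mp hc'
  refine ⟨l.dropLast.getLast hdne, l.dropLast, ⟨hdne, ?_, ?_, c1⟩, ?_, hsplit, ?_⟩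
  · rw [hsplit, List.head?_append_of_ne_nil _ hdne] at hh
    exact hh
  · exact List.getLast?_eq_getLast_of_ne_nil hdne
  · exact cross _ (by rw [Option.mem_def, List.getLast?_eq_getLast_of_ne_nil hdne]) v rfl
  · have h1 : 1 ≤ l.dropLast.length := List.length_pos_iff.mpr hdne
    simp only [len]
    omega

lemma oplus_top (R : Set V) (r v : V) : oplus R r (⊤ : LLen) v = ⊤ := rfl

lemma llLe_any_top (x : LLen) : llLe x (⊤ : LLen) := by
  cases x <;> exact trivial

lemma dbou_le_of_walk (G' : SimpleGraph V) {r : V} (S : Set V) (hrS : r ∉ S) :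
    ∀ (n : ℕ) (l : List V) (u : V), u ∈ S → IsWalk G' r u l → len l ≤ n →
      ∃ x ∈ S, dbou G' r S x ≤ (len l : ℕ∞) := by
  intro n
  induction n with
  | zero =>
    intro l u huS hw hle
    have := hw.len_pos (fun h => hrS (h ▸ huS))
    omega
  | succ n ih =>
    intro l u huS hw hle
    have hur : u ≠ r := fun h => hrS (h ▸ huS)
    obtain ⟨w, l', hw', hadj, -, hlen⟩ := isWalk_split hw hur
    by_cases hwS : w ∈ S
    · obtain ⟨x, hxS, hx⟩ := ih l' w hwS hw' (by omega)
      refine ⟨x, hxS, hx.trans ?_⟩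
      rw [hlen]
      exact_mod_cast Nat.le_succ _
    · refine ⟨u, huS, ?_⟩
      have h1 : dbou G' r S u ≤ G'.edist r w + 1 := by
        simp only [dbou]
        exact iInf₂_le w ⟨hadj.symm, hwS⟩
      have h2 : G'.edist r w ≤ (len l' : ℕ∞) := by
        obtain ⟨p, hp⟩ := exists_walk_len l' r hw'
        calc G'.edist r w ≤ p.length := p.edist_le
          _ = _ := by exact_mod_cast hp
      calc dbou G' r S u ≤ G'.edist r w + 1 := h1
        _ ≤ (len l' : ℕ∞) + 1 := add_le_add_left h2 1
        _ = (len l : ℕ∞) := by rw [hlen]; push_cast; ring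

end Aux

/-- **Lemma 8.** Let `S ⊆ V∖{r}` and let `v ∈ S` have minimal distance bound
`d_bou(v,S)` among all vertices of `S`.  Then the landmark distance from `r` to `v` in `G'`
equals the landmark distance bound `d^L_bou(v,S)`, i.e. it is the lexicographic minimum of
`{ d^L_{G'}(r,w) ⊕ v | w ∈ N_{G'}(v) ∖ S }` (`⊤` if this set is empty). -/
theorem boundary_vertex_lemma (G' : SimpleGraph V) (R : Set V) (r : V) (hrR : r ∈ R)
    (S : Set V) (hrS : r ∉ S) (v : V) (hv : v ∈ S)
    (hmin : ∀ u ∈ S, dbou G' r S v ≤ dbou G' r S u) :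
    lmDist G' R r v ∈ insert (⊤ : LLen) (lmBouSet G' R r v S) ∧
    ∀ x ∈ lmBouSet G' R r v S, llLe (lmDist G' R r v) x := by
  classical
  have hvr : v ≠ r := fun h => hrS (h ▸ hv)
  by_cases hW : ∃ l, IsWalk G' r v l
  · -- reachable case
    -- notation
    have key : ∀ u, (∃ l, IsWalk G' r u l) →
        lmDist G' R r u = some (sInf {n | ∃ l, IsWalk G' r u l ∧ len l = n},
          ∃ l, IsWalk G' r u l ∧ len l = sInf {n | ∃ l', IsWalk G' r u l' ∧ len l' = n} ∧
            ∃ w ∈ l, w ∈ R ∧ w ≠ r) := by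
      intro u hu
      rw [lmDist]; exact if_pos hu
    set D := sInf {n | ∃ l, IsWalk G' r v l ∧ len l = n} with hDdef
    set Φ : Prop := ∃ l, IsWalk G' r v l ∧ len l = sInf {n | ∃ l', IsWalk G' r v l' ∧ len l' = n} ∧
        ∃ w ∈ l, w ∈ R ∧ w ≠ r with hΦdef
    have hval : lmDist G' R r v = some (D, Φ) := key v hW
    obtain ⟨l₀, hl₀⟩ := hW
    have hne : {n | ∃ l, IsWalk G' r v l ∧ len l = n}.Nonempty := ⟨len l₀, l₀, hl₀, rfl⟩
    obtain ⟨lmin, hlmin, hlenmin⟩ := Nat.sInf_mem hne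
    have hedist : (D : ℕ∞) = G'.edist r v := sInf_len_eq_edist ⟨l₀, hl₀⟩
    have hDpos : 1 ≤ D := by
      rw [hDdef, ← hlenmin]
      exact hlmin.len_pos hvr
    -- D ≤ len l'' + 1 for any walk l'' to a neighbor w of v
    have hDle : ∀ w, G'.Adj v w → ∀ l'' , IsWalk G' r w l'' → D ≤ len l'' + 1 := by
      intro w hadj l'' hl''
      have h1 := isWalk_append hl'' hadj.symm
      have h2 : D ≤ len (l'' ++ [v]) := Nat.sInf_le ⟨l'' ++ [v], h1.1, rfl⟩
      rw [h1.2] at h2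
      exact h2
    -- (D : ℕ∞) ≤ edist r w + 1 for neighbors w
    have hmono : ∀ w, G'.Adj v w → (D : ℕ∞) ≤ G'.edist r w + 1 := by
      intro w hadj
      rw [hedist]
      calc G'.edist r v ≤ G'.edist r w + G'.edist w v := SimpleGraph.edist_triangle
        _ ≤ G'.edist r w + 1 := by
            gcongr
            exact le_of_eq (SimpleGraph.edist_eq_one_iff_adj.mpr hadj.symm)
    have hge : (D : ℕ∞) ≤ dbou G' r S v := by
      simp only [dbou]
      exact le_iInf₂ fun w hw => hmono w hw.1
    have hle : dbou G' r S v ≤ (D : ℕ∞) := by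
      obtain ⟨x, hxS, hx⟩ := dbou_le_of_walk G' S hrS (len lmin) lmin v hv hlmin le_rfl
      rw [hlenmin] at hx
      exact (hmin x hxS).trans hx
    have hdbou : dbou G' r S v = (D : ℕ∞) := le_antisymm hle hge
    -- the penultimate vertex of any shortest walk to v is outside S
    have penult : ∀ (l l' : List V) (w : V), IsWalk G' r w l' → len l = D →
        len l = len l' + 1 → w ∉ S := by
      intro l l' w hw' hlD hll' hwS
      obtain ⟨x, hxS, hx⟩ := dbou_le_of_walk G' S hrS (len l') l' w hwS hw' le_rfl
      have h1 : (D : ℕ∞) ≤ (len l' : ℕ∞) := hdbou ▸ (hmin x hxS).trans hx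
      have h2 : D ≤ len l' := by exact_mod_cast h1
      omega
    -- flag transfer: if w is a neighbor with shortest distance D - 1, flags transfer to v
    have flag_imp : ∀ w, G'.Adj v w → (∃ l, IsWalk G' r w l) →
        sInf {n | ∃ l, IsWalk G' r w l ∧ len l = n} + 1 = D →
        ((v ∈ R ∧ v ≠ r) ∨ (∃ l, IsWalk G' r w l ∧
          len l = sInf {n | ∃ l', IsWalk G' r w l' ∧ len l' = n} ∧
          ∃ x ∈ l, x ∈ R ∧ x ≠ r)) → Φ := by
      rintro w hadj hWw hDw (hvR | ⟨lw, hlw, hlwlen, x, hxmem, hxR, hxr⟩)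
      · exact ⟨lmin, hlmin, hlenmin, v, hlmin.last_mem, hvR.1, hvR.2⟩
      · obtain ⟨hwalk, hlen⟩ := isWalk_append hlw hadj.symm
        refine ⟨lw ++ [v], hwalk, ?_, x, List.mem_append_left _ hxmem, hxR, hxr⟩
        rw [hlen, hlwlen, hDw]
    refine ⟨?_, ?_⟩
    · -- membership
      -- choose a shortest walk realizing the flag Φ if possible
      have hchoice : ∃ l, IsWalk G' r v l ∧ len l = D ∧ (Φ → ∃ x ∈ l, x ∈ R ∧ x ≠ r) := by
        by_cases hΦ : Φ
        · obtain ⟨l, hl, hlen, hx⟩ := hΦ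
          exact ⟨l, hl, hlen, fun _ => hx⟩
        · exact ⟨lmin, hlmin, hlenmin, fun h => absurd h hΦ⟩
      obtain ⟨l, hl, hlD, hflag⟩ := hchoice
      obtain ⟨w, l', hw', hadj, hsplit, hll'⟩ := isWalk_split hl hvr
      have hwS : w ∉ S := penult l l' w hw' hlD hll'
      have hWw : ∃ l, IsWalk G' r w l := ⟨l', hw'⟩
      -- the prefix is a shortest walk to w
      have hDw : sInf {n | ∃ l, IsWalk G' r w l ∧ len l = n} = len l' := by
        refine le_antisymm (Nat.sInf_le ⟨l', hw', rfl⟩) ?_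
        refine le_csInf ⟨len l', l', hw', rfl⟩ ?_
        rintro m ⟨l'', hl'', rfl⟩
        have := hDle w hadj.symm l'' hl''
        omega
      have hDw1 : sInf {n | ∃ l, IsWalk G' r w l ∧ len l = n} + 1 = D := by omega
      right
      refine ⟨w, hadj.symm, hwS, ?_⟩
      rw [hval, key w hWw]
      show some (D, Φ) = some (sInf {n | ∃ l, IsWalk G' r w l ∧ len l = n} + 1,
        (v ∈ R ∧ v ≠ r) ∨ _)
      have hiff : Φ ↔ ((v ∈ R ∧ v ≠ r) ∨ (∃ l, IsWalk G' r w l ∧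
          len l = sInf {n | ∃ l', IsWalk G' r w l' ∧ len l' = n} ∧
          ∃ x ∈ l, x ∈ R ∧ x ≠ r)) := by
        constructor
        · intro hΦ
          by_cases hvR : v ∈ R
          · exact Or.inl ⟨hvR, hvr⟩
          · obtain ⟨x, hxmem, hxR, hxr⟩ := hflag hΦ
            have hxv : x ≠ v := fun h => hvR (h ▸ hxR)
            have hxl' : x ∈ l' := by
              rw [hsplit] at hxmem
              rcases List.mem_append.mp hxmem with h | h
              · exact h
              · exact absurd (List.mem_singleton.mp h) hxv
            exact Or.inr ⟨l', hw', hDw.symm, x, hxl', hxR, hxr⟩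
        · exact flag_imp w hadj.symm hWw hDw1
      rw [hDw1, propext hiff]
    · -- lower bound
      rintro x ⟨w, hadj, hwS, rfl⟩
      by_cases hWw : ∃ l, IsWalk G' r w l
      · rw [hval, key w hWw]
        have hDle' : D ≤ sInf {n | ∃ l, IsWalk G' r w l ∧ len l = n} + 1 := by
          obtain ⟨lw, hlw, hlwlen⟩ := Nat.sInf_mem
            (⟨len hWw.choose, hWw.choose, hWw.choose_spec, rfl⟩ :
              {n | ∃ l, IsWalk G' r w l ∧ len l = n}.Nonempty)
          have := hDle w hadj lw hlw
          omega
        show D < sInf {n | ∃ l, IsWalk G' r w l ∧ len l = n} + 1 ∨ _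
        rcases lt_or_eq_of_le hDle' with hlt | heq
        · exact Or.inl hlt
        · exact Or.inr ⟨heq, flag_imp w hadj hWw heq.symm⟩
      · have hno : lmDist G' R r w = ⊤ := by rw [lmDist]; exact if_neg hWw
        rw [hno, oplus_top]
        exact llLe_any_top _
  · -- unreachable case
    have hval : lmDist G' R r v = ⊤ := by rw [lmDist]; exact if_neg hW
    refine ⟨by rw [hval]; exact Set.mem_insert _ _, ?_⟩
    rintro x ⟨w, hadj, hwS, rfl⟩
    have hWw : ¬ ∃ l, IsWalk G' r w l := by
      rintro ⟨l, hl⟩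
      exact hW ⟨l ++ [v], (isWalk_append hl hadj.symm).1⟩
    have hno : lmDist G' R r w = ⊤ := by rw [lmDist]; exact if_neg hWw
    rw [hno, oplus_top]
    exact llLe_any_top _

end BatchHL
end
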